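/- If p(z) = z + a_2 z^2 + ... + a_N z^N is a polynomial of degree N ≥ 2 that is injective on the open unit disk, then |a_N| ≤ 1/N. -/

import Mathlib

open Polynomial Metric

lemma norm_multiset_prod' (s : Multiset ℂ) : ‖s.prod‖ = (s.map fun z => ‖z‖).prod := by
  induction s using Multiset.induction_on with
  | empty => simp
  | cons a s ih => simp [ih]

lemma one_le_multiset_prod' (s : Multiset ℝ) (h : ∀ x ∈ s, (1:ℝ) ≤ x) : 1 ≤ s.prod := by
  induction s using Multiset.induction_on with
  | empty => simp
  | cons a s ih =>
    simp only [Multiset.prod_cons]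
    have ha := h a (Multiset.mem_cons_self a s)
    have hs := ih fun x hx => h x (Multiset.mem_cons_of_mem hx)
    nlinarith

/-- If a complex polynomial is injective on the unit ball, its derivative has no zero there. -/
lemma aux_deriv_ne (P : Polynomial ℂ) (hdeg : 2 ≤ P.natDegree)
    (hinj : Set.InjOn (fun z : ℂ => P.eval z) (Metric.ball 0 1)) :
    ∀ w ∈ Metric.ball (0:ℂ) 1, P.derivative.eval w ≠ 0 := by
  intro w hw hQw
  set G : Polynomial ℂ := P.comp (X + C w) - C (P.eval w) with hGdef
  have hGev : ∀ z : ℂ, G.eval z = P.eval (z + w) - P.eval w := by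
    intro z; simp [hGdef]
  have hGdeg : G.natDegree = P.natDegree := by
    rw [hGdef, natDegree_sub_C, natDegree_comp, natDegree_X_add_C, mul_one]
  have hGne : G ≠ 0 := by
    intro h; rw [h, natDegree_zero] at hGdeg; omega
  have hG0 : G.eval 0 = 0 := by rw [hGev]; simp
  have hG'0 : G.derivative.eval 0 = 0 := by
    rw [hGdef, derivative_sub, derivative_C, sub_zero, derivative_comp, derivative_add,
      derivative_X, derivative_C, add_zero]
    simp [hQw]
  set k := G.rootMultiplicity 0 with hkdef
  have hk2 : 2 ≤ k :=
    (one_lt_rootMultiplicity_iff_isRoot hGne).mpr ⟨hG0, hG'0⟩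
  set H := G /ₘ (X - C 0) ^ k with hHdef
  have hGH : ∀ z : ℂ, G.eval z = z ^ k * H.eval z := by
    intro z
    conv_lhs => rw [← G.pow_mul_divByMonic_rootMultiplicity_eq 0]
    simp [hHdef, hkdef]
  have hH0 : H.eval 0 ≠ 0 := eval_divByMonic_pow_rootMultiplicity_ne_zero 0 hGne
  set h : ℂ → ℂ := fun z => H.eval z with hhdef
  set c : ℂ := Complex.exp (Complex.log (h 0) / k) with hcdef
  set r : ℂ → ℂ := fun z => c * Complex.exp (Complex.log (h z / h 0) / k) with hrdef
  set φ : ℂ → ℂ := fun z => z * r z with hφdef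
  have hc0 : c ≠ 0 := Complex.exp_ne_zero _
  have hkC : (k:ℂ) ≠ 0 := Nat.cast_ne_zero.mpr (by omega)
  have hH : AnalyticAt ℂ h 0 :=
    Complex.analyticAt_iff_eventually_differentiableAt.mpr
      (Filter.Eventually.of_forall fun z => (H.differentiable).differentiableAt)
  have hra : AnalyticAt ℂ r 0 := by
    apply analyticAt_const.mul
    apply AnalyticAt.cexp
    exact ((hH.div analyticAt_const hH0).clog
      (by show H.eval 0 / H.eval 0 ∈ Complex.slitPlane; rw [div_self hH0]; exact Complex.one_mem_slitPlane)).div analyticAt_const hkC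
  have hφa : AnalyticAt ℂ φ 0 := analyticAt_id.mul hra
  have hr0 : r 0 = c := by
    simp [hrdef, div_self hH0, Complex.log_one]
  have hdφ : deriv φ 0 = c := by
    rw [hφdef]
    rw [deriv_fun_mul differentiableAt_fun_id hra.differentiableAt]
    simp [hr0]
  have hφ0 : φ 0 = 0 := by simp [hφdef]
  have hne : ¬ ∀ᶠ z in nhds 0, φ z = φ 0 := by
    intro hev
    have heq : φ =ᶠ[nhds 0] fun _ => φ 0 := hev
    have : deriv φ 0 = 0 := by rw [heq.deriv_eq]; simp
    rw [hdφ] at this; exact hc0 this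
  have hmap : nhds (0:ℂ) ≤ Filter.map φ (nhds 0) := by
    rcases hφa.eventually_constant_or_nhds_le_map_nhds with h1 | h2
    · exact absurd h1 hne
    · rwa [hφ0] at h2
  set S : Set ℂ := {z | h z ≠ 0 ∧ z + w ∈ Metric.ball (0:ℂ) 1} with hSdef
  have hSnhds : S ∈ nhds (0:ℂ) := by
    have h1 : ∀ᶠ z in nhds (0:ℂ), h z ≠ 0 := hH.continuousAt.eventually_ne hH0
    have h2 : ∀ᶠ z in nhds (0:ℂ), z + w ∈ Metric.ball (0:ℂ) 1 := by
      have ht : Filter.Tendsto (fun z : ℂ => z + w) (nhds 0) (nhds w) := by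
        simpa using (continuous_add_right w).tendsto 0
      exact ht.eventually (isOpen_ball.eventually_mem (by simpa using hw))
    filter_upwards [h1, h2] with z hz1 hz2 using ⟨hz1, hz2⟩
  have hφS : φ '' S ∈ nhds (0:ℂ) := hmap (Filter.image_mem_map hSnhds)
  obtain ⟨ε, hε, hball⟩ := Metric.mem_nhds_iff.mp hφS
  have hkne : k ≠ 0 := by omega
  set ζ : ℂ := Complex.exp (2 * Real.pi * Complex.I / k) with hζdef
  have hζ : IsPrimitiveRoot ζ k := Complex.isPrimitiveRoot_exp k hkne
  have hζ1 : ζ ≠ 1 := hζ.ne_one (by omega)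
  have hζk : ζ ^ k = 1 := hζ.pow_eq_one
  have hζnorm : ‖ζ‖ = 1 := by
    have h1 : ‖ζ‖ ^ k = 1 := by rw [← norm_pow, hζk, norm_one]
    rcases lt_trichotomy ‖ζ‖ 1 with hlt | heq | hgt
    · have := pow_lt_one₀ (norm_nonneg ζ) hlt hkne
      rw [h1] at this; linarith
    · exact heq
    · have := one_lt_pow₀ hgt hkne
      rw [h1] at this; linarith
  set u : ℂ := ((ε/2 : ℝ) : ℂ) with hudef
  have hu0 : u ≠ 0 := by
    rw [hudef]
    exact Complex.ofReal_ne_zero.mpr (by positivity)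
  have hunorm : ‖u‖ = ε / 2 := by
    rw [hudef, Complex.norm_real, Real.norm_of_nonneg (by linarith)]
  have huball : u ∈ Metric.ball (0:ℂ) ε := by
    rw [mem_ball_zero_iff, hunorm]; linarith
  have huζ : ζ * u ∈ Metric.ball (0:ℂ) ε := by
    rw [mem_ball_zero_iff, norm_mul, hζnorm, one_mul, hunorm]; linarith
  obtain ⟨z₁, hz₁S, hz₁⟩ := hball huball
  obtain ⟨z₂, hz₂S, hz₂⟩ := hball huζ
  have hφpow : ∀ z ∈ S, φ z ^ k = G.eval z := by
    intro z hz
    have hz0 : h z ≠ 0 := hz.1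
    have hrk : r z ^ k = h z := by
      rw [hrdef]
      simp only
      rw [mul_pow, hcdef, ← Complex.exp_nat_mul, ← Complex.exp_nat_mul,
        mul_div_cancel₀ _ hkC, mul_div_cancel₀ _ hkC,
        Complex.exp_log hH0, Complex.exp_log (div_ne_zero hz0 hH0)]
      field_simp
    calc φ z ^ k = z ^ k * r z ^ k := by rw [hφdef]; simp [mul_pow]
    _ = z ^ k * h z := by rw [hrk]
    _ = G.eval z := (hGH z).symm
  have hG12 : G.eval z₁ = G.eval z₂ := by
    rw [← hφpow z₁ hz₁S, ← hφpow z₂ hz₂S, hz₁, hz₂, mul_pow, hζk, one_mul]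
  have hP12 : P.eval (z₁ + w) = P.eval (z₂ + w) := by
    have h12 := hG12
    rw [hGev, hGev] at h12
    exact sub_left_injective h12
  have heqz : z₁ + w = z₂ + w := hinj hz₁S.2 hz₂S.2 hP12
  have hz12 : z₁ = z₂ := add_right_cancel heqz
  rw [hz12] at hz₁
  rw [hz₂] at hz₁
  exact hζ1 (mul_right_cancel₀ hu0 (hz₁.trans (one_mul u).symm))

theorem stmt_2 (N : ℕ) (hN : 2 ≤ N) (a : ℕ → ℂ) (hdeg : a N ≠ 0)
    (hinj : Set.InjOn (fun z : ℂ => z + ∑ n ∈ Finset.Icc 2 N, a n * z ^ n)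
      (Metric.ball 0 1)) :
    ‖a N‖ ≤ 1 / N := by
  set P : Polynomial ℂ := X + ∑ n ∈ Finset.Icc 2 N, C (a n) * X ^ n with hPdef
  have hPev : ∀ z : ℂ, P.eval z = z + ∑ n ∈ Finset.Icc 2 N, a n * z ^ n := by
    intro z; simp [hPdef, eval_finset_sum]
  have hNpos : 0 < N := by omega
  have hPcoeffN : P.coeff N = a N := by
    rw [hPdef, coeff_add, finset_sum_coeff]
    rw [Finset.sum_eq_single N]
    · have h1N : ¬ (1 = N) := by omega
      simp [coeff_X, coeff_X_pow, h1N]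
    · intro b hb hbne
      simp [coeff_X_pow, hbne, Ne.symm hbne]
    · intro hnm
      simp at hnm; omega
  have hPdegle : P.natDegree ≤ N := by
    rw [hPdef]
    apply le_trans (natDegree_add_le _ _)
    apply max_le
    · rw [natDegree_X]; omega
    · apply natDegree_sum_le_of_forall_le
      intro i hi
      refine le_trans (natDegree_C_mul_le _ _) ?_
      simp only [natDegree_X_pow]
      exact (Finset.mem_Icc.mp hi).2
  have hPdeg : P.natDegree = N :=
    natDegree_eq_of_le_of_coeff_ne_zero hPdegle (hPcoeffN ▸ hdeg)
  set Q := P.derivative with hQdef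
  have hQcoeff : Q.coeff (N-1) = a N * N := by
    rw [hQdef, coeff_derivative]
    rw [(by omega : N - 1 + 1 = N), hPcoeffN]
    congr 1
    push_cast [(by omega : 1 ≤ N)]
    ring
  have hNC : (N : ℂ) ≠ 0 := Nat.cast_ne_zero.mpr hNpos.ne'
  have hQdegle : Q.natDegree ≤ N - 1 := by
    have h := natDegree_derivative_le P
    rw [← hQdef] at h
    omega
  have hQdeg : Q.natDegree = N - 1 :=
    natDegree_eq_of_le_of_coeff_ne_zero hQdegle (by rw [hQcoeff]; exact mul_ne_zero hdeg hNC)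
  have hQlc : Q.leadingCoeff = a N * N := by
    rw [leadingCoeff, hQdeg, hQcoeff]
  have hQne : Q ≠ 0 := by
    intro hq
    rw [hq, leadingCoeff_zero] at hQlc
    exact mul_ne_zero hdeg hNC hQlc.symm
  have hQ0 : Q.eval 0 = 1 := by
    rw [hQdef, hPdef, derivative_add, derivative_X, derivative_sum]
    rw [eval_add, eval_one, eval_finset_sum]
    rw [Finset.sum_eq_zero]
    · ring
    · intro n hn
      have hn2 : 2 ≤ n := (Finset.mem_Icc.mp hn).1
      rw [derivative_C_mul, derivative_X_pow]
      simp [zero_pow (by omega : n - 1 ≠ 0)]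
  have hQnz : ∀ z ∈ Metric.ball (0:ℂ) 1, Q.eval z ≠ 0 := by
    apply aux_deriv_ne P (by omega : 2 ≤ P.natDegree)
    intro x hx y hy hxy
    apply hinj hx hy
    simpa [hPev] using hxy
  have hsplits : Q.roots.card = Q.natDegree :=
    splits_iff_card_roots.mp (IsAlgClosed.splits Q)
  have key := C_leadingCoeff_mul_prod_multiset_X_sub_C hsplits
  have h1 : (1:ℂ) = Q.leadingCoeff * ((Q.roots.map fun ρ => -ρ).prod) := by
    conv_lhs => rw [← hQ0, ← key]
    rw [eval_mul, eval_C, eval_multiset_prod, Multiset.map_map]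
    simp [Function.comp]
  have hnorm1 : (1:ℝ) = ‖a N‖ * N * ((Q.roots.map fun ρ => ‖ρ‖).prod) := by
    have h2 := congrArg Norm.norm h1
    simp only [norm_one, norm_mul] at h2
    rw [hQlc, norm_mul, Complex.norm_natCast, norm_multiset_prod', Multiset.map_map] at h2
    simpa [Function.comp] using h2
  have hprodge : (1:ℝ) ≤ (Q.roots.map fun ρ => ‖ρ‖).prod := by
    apply one_le_multiset_prod'
    intro x hx
    obtain ⟨ρ, hρ, rfl⟩ := Multiset.mem_map.mp hx
    by_contra hlt
    push_neg at hlt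
    exact hQnz ρ (mem_ball_zero_iff.mpr hlt) ((mem_roots hQne).mp hρ)
  have haN : ‖a N‖ * N ≤ 1 := by
    nlinarith [norm_nonneg (a N), (Nat.cast_nonneg N : (0:ℝ) ≤ N)]
  rw [le_div_iff₀ (by exact_mod_cast hNpos)]
  exact haN
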